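/- Let S ⊊ ℤ² be B-stable. If S contains three points of some border triangle, then S = ℤ². Equivalently, S ⊊ ℤ² is B-stable if and only if S contains at most 2 points from every border triangle. -/

import Mathlib

/-- Embed a lattice point into the plane. -/
def toR (p : ℤ × ℤ) : ℝ × ℝ := ((p.1 : ℝ), (p.2 : ℝ))

/-- Determinant of the 2×2 matrix with columns `u`, `v`. -/
def det2 (u v : ℤ × ℤ) : ℤ := u.1 * v.2 - u.2 * v.1

/-- The set of lattice points in the (closed) triangle with vertices `a b c`. -/
def triPts (a b c : ℤ × ℤ) : Set (ℤ × ℤ) :=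
  {p | toR p ∈ convexHull ℝ {toR a, toR b, toR c}}

/-- A border triangle: a lattice triangle with exactly 4 lattice points, whose
fourth point lies on the boundary (not in the interior). -/
def IsBorderTri (T : Set (ℤ × ℤ)) : Prop :=
  ∃ a b c d : ℤ × ℤ, det2 (b - a) (c - a) ≠ 0 ∧
    T = triPts a b c ∧ T = {a, b, c, d} ∧ T.ncard = 4 ∧
    toR d ∉ interior (convexHull ℝ {toR a, toR b, toR c})

/-- An internal triangle: a lattice triangle with exactly 4 lattice points, whose
fourth point lies in the interior. -/
def IsInternalTri (T : Set (ℤ × ℤ)) : Prop :=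
  ∃ a b c d : ℤ × ℤ, det2 (b - a) (c - a) ≠ 0 ∧
    T = triPts a b c ∧ T = {a, b, c, d} ∧ T.ncard = 4 ∧
    toR d ∈ interior (convexHull ℝ {toR a, toR b, toR c})

/-- `S` is B-stable: no border triangle has exactly three of its points in `S`. -/
def BStable (S : Set (ℤ × ℤ)) : Prop :=
  ∀ T, IsBorderTri T → (T ∩ S).ncard ≠ 3

/-- `S` is I-stable: no internal triangle has exactly three of its points in `S`. -/
def IStable (S : Set (ℤ × ℤ)) : Prop :=
  ∀ T, IsInternalTri T → (T ∩ S).ncard ≠ 3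

/-- Upper density of a subset of `ℤ²`. -/
noncomputable def upperDensity (S : Set (ℤ × ℤ)) : ℝ :=
  Filter.limsup (fun n : ℕ =>
    ((S ∩ Set.Icc (-(n : ℤ), -(n : ℤ)) ((n : ℤ), (n : ℤ))).ncard : ℝ) /
      (2 * (n : ℝ) + 1) ^ 2) Filter.atTop





-- ===== auxiliary development =====

def det2R (u v : ℝ × ℝ) : ℝ := u.1 * v.2 - u.2 * v.1



lemma mem_hull3 {A B C x : ℝ × ℝ} :
    x ∈ convexHull ℝ {A, B, C} ↔
    ∃ α β γ : ℝ, 0 ≤ α ∧ 0 ≤ β ∧ 0 ≤ γ ∧ α + β + γ = 1 ∧ α • A + β • B + γ • C = x := by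
  rw [show ({A, B, C} : Set (ℝ × ℝ)) = insert A {B, C} from rfl,
    convexHull_insert ⟨B, by simp⟩, convexHull_pair]
  rw [mem_convexJoin]
  constructor
  · rintro ⟨a, ha, b, ⟨β', γ', hβ', hγ', hbg, rfl⟩, ⟨p, q, hp, hq, hpq, rfl⟩⟩
    rw [Set.mem_singleton_iff] at ha
    subst ha
    exact ⟨p, q * β', q * γ', hp, by positivity, by positivity, by nlinarith, by
      rw [smul_add, smul_smul, smul_smul]; abel⟩
  · rintro ⟨α, β, γ, hα, hβ, hγ, hsum, rfl⟩
    by_cases h : β + γ = 0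
    · refine ⟨A, rfl, B, ⟨1, 0, by norm_num⟩, α, β + γ, hα, by positivity, by linarith, ?_⟩
      have hβ0 : β = 0 := by linarith
      have hγ0 : γ = 0 := by linarith
      simp [hβ0, hγ0, smul_add]
    · have hbc : 0 < β + γ := lt_of_le_of_ne (by positivity) (Ne.symm h)
      refine ⟨A, rfl, (β / (β + γ)) • B + (γ / (β + γ)) • C,
        ⟨β / (β + γ), γ / (β + γ), by positivity, by positivity, by field_simp, rfl⟩,
        α, β + γ, hα, le_of_lt hbc, by linarith, ?_⟩
      rw [smul_add, smul_smul, smul_smul]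
      rw [mul_div_cancel₀ _ (ne_of_gt hbc), mul_div_cancel₀ _ (ne_of_gt hbc)]
      abel


lemma coord_beta (A B C : ℝ × ℝ) (β γ : ℝ) :
    det2R ((1 - β - γ) • A + β • B + γ • C - A) (C - A) = β * det2R (B - A) (C - A) := by
  simp only [det2R, Prod.smul_fst, Prod.smul_snd, Prod.fst_add, Prod.snd_add, Prod.fst_sub,
    Prod.snd_sub, smul_eq_mul]
  ring

lemma coord_gamma (A B C : ℝ × ℝ) (β γ : ℝ) :
    det2R (B - A) ((1 - β - γ) • A + β • B + γ • C - A) = γ * det2R (B - A) (C - A) := by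
  simp only [det2R, Prod.smul_fst, Prod.smul_snd, Prod.fst_add, Prod.snd_add, Prod.fst_sub,
    Prod.snd_sub, smul_eq_mul]
  ring

lemma cramer1 (A B C x : ℝ × ℝ) :
    det2R (x - A) (C - A) * (B.1 - A.1) + det2R (B - A) (x - A) * (C.1 - A.1)
      = (x.1 - A.1) * det2R (B - A) (C - A) := by
  simp only [det2R, Prod.fst_sub, Prod.snd_sub]; ring

lemma cramer2 (A B C x : ℝ × ℝ) :
    det2R (x - A) (C - A) * (B.2 - A.2) + det2R (B - A) (x - A) * (C.2 - A.2)
      = (x.2 - A.2) * det2R (B - A) (C - A) := by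
  simp only [det2R, Prod.fst_sub, Prod.snd_sub]; ring

lemma hull_iff_coords {A B C x : ℝ × ℝ} (hD : det2R (B - A) (C - A) ≠ 0) :
    x ∈ convexHull ℝ {A, B, C} ↔
      0 ≤ det2R (x - A) (C - A) * det2R (B - A) (C - A) ∧
      0 ≤ det2R (B - A) (x - A) * det2R (B - A) (C - A) ∧
      det2R (x - A) (C - A) * det2R (B - A) (C - A) +
        det2R (B - A) (x - A) * det2R (B - A) (C - A) ≤ det2R (B - A) (C - A) ^ 2 := by
  have hD2 : 0 < det2R (B - A) (C - A) ^ 2 := by positivity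
  constructor
  · rintro hx
    obtain ⟨α, β, γ, hα, hβ, hγ, hsum, rfl⟩ := mem_hull3.1 hx
    have hα' : α = 1 - β - γ := by linarith
    subst hα'
    rw [coord_beta, coord_gamma]
    refine ⟨by nlinarith, by nlinarith, by nlinarith⟩
  · rintro ⟨h1, h2, h3⟩
    set D := det2R (B - A) (C - A) with hDdef
    set s := det2R (x - A) (C - A) with hsdef
    set t := det2R (B - A) (x - A) with htdef
    set β := s / D with hβdef
    set γ := t / D with hγdef
    have eβ : β * D ^ 2 = s * D := by rw [hβdef]; field_simp
    have eγ : γ * D ^ 2 = t * D := by rw [hγdef]; field_simp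
    have hβ : 0 ≤ β := by
      have h := div_nonneg (eβ ▸ h1) (le_of_lt hD2)
      rwa [mul_div_cancel_right₀ _ (ne_of_gt hD2)] at h
    have hγ : 0 ≤ γ := by
      have h := div_nonneg (eγ ▸ h2) (le_of_lt hD2)
      rwa [mul_div_cancel_right₀ _ (ne_of_gt hD2)] at h
    have hβγ : β + γ ≤ 1 := by
      have h : (β + γ) * D ^ 2 ≤ 1 * D ^ 2 := by
        rw [add_mul, eβ, eγ]; linarith
      exact le_of_mul_le_mul_right h hD2
    refine mem_hull3.2 ⟨1 - β - γ, β, γ, by linarith, hβ, hγ, by ring, ?_⟩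
    have key1 : β * (B.1 - A.1) + γ * (C.1 - A.1) = x.1 - A.1 := by
      rw [hβdef, hγdef, div_mul_eq_mul_div, div_mul_eq_mul_div, ← add_div,
        hsdef, htdef, hDdef, cramer1, mul_div_cancel_right₀ _ hD]
    have key2 : β * (B.2 - A.2) + γ * (C.2 - A.2) = x.2 - A.2 := by
      rw [hβdef, hγdef, div_mul_eq_mul_div, div_mul_eq_mul_div, ← add_div,
        hsdef, htdef, hDdef, cramer2, mul_div_cancel_right₀ _ hD]
    rw [Prod.ext_iff]
    refine ⟨?_, ?_⟩
    · simp only [Prod.smul_fst, Prod.fst_add, smul_eq_mul]; linarith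
    · simp only [Prod.smul_snd, Prod.snd_add, smul_eq_mul]; linarith


lemma affine_not_interior {s : Set (ℝ × ℝ)} {f : ℝ × ℝ → ℝ} {x n : ℝ × ℝ} {c : ℝ}
    (hlin : ∀ (y : ℝ × ℝ) (t : ℝ), f (y + t • n) = f y + t * c) (hc : c < 0)
    (hs : ∀ y ∈ s, 0 ≤ f y) (hx : f x = 0) : x ∉ interior s := by
  intro h
  rw [mem_interior_iff_mem_nhds, Metric.mem_nhds_iff] at h
  obtain ⟨ε, hε, hball⟩ := h
  set t := ε / (2 * (‖n‖ + 1)) with ht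
  have hn : (0:ℝ) < ‖n‖ + 1 := by positivity
  have htpos : 0 < t := by positivity
  have hy : x + t • n ∈ s := by
    apply hball
    rw [Metric.mem_ball, dist_eq_norm, add_sub_cancel_left, norm_smul, Real.norm_eq_abs,
      abs_of_pos htpos]
    have h1 : t * ‖n‖ < t * (‖n‖ + 1) := by nlinarith
    have h2 : t * (‖n‖ + 1) = ε / 2 := by
      rw [ht]; field_simp
    nlinarith
  have := hs _ hy
  rw [hlin, hx] at this
  nlinarith

lemma sq_sum_pos {a b : ℝ} (h : ¬(a = 0 ∧ b = 0)) : 0 < a ^ 2 + b ^ 2 := by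
  rcases not_and_or.1 h with h | h
  · have := mul_self_pos.mpr h
    nlinarith [sq_nonneg b]
  · have := mul_self_pos.mpr h
    nlinarith [sq_nonneg a]


section
variable {A B C x : ℝ × ℝ}

lemma CA_ne (hD : det2R (B - A) (C - A) ≠ 0) : ¬(C.1 - A.1 = 0 ∧ C.2 - A.2 = 0) := by
  rintro ⟨h1, h2⟩
  apply hD
  simp only [det2R, Prod.fst_sub, Prod.snd_sub, h1, h2]
  ring

lemma BA_ne (hD : det2R (B - A) (C - A) ≠ 0) : ¬(B.1 - A.1 = 0 ∧ B.2 - A.2 = 0) := by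
  rintro ⟨h1, h2⟩
  apply hD
  simp only [det2R, Prod.fst_sub, Prod.snd_sub, h1, h2]
  ring

lemma CB_ne (hD : det2R (B - A) (C - A) ≠ 0) : ¬(C.1 - B.1 = 0 ∧ C.2 - B.2 = 0) := by
  rintro ⟨h1, h2⟩
  apply hD
  have e1 : C.1 = B.1 := by linarith
  have e2 : C.2 = B.2 := by linarith
  simp only [det2R, Prod.fst_sub, Prod.snd_sub, e1, e2]
  ring

lemma not_interior_1 (hD : det2R (B - A) (C - A) ≠ 0)
    (hx : det2R (x - A) (C - A) = 0) :
    x ∉ interior (convexHull ℝ {A, B, C}) := by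
  set D := det2R (B - A) (C - A) with hDdef
  have hD2 : 0 < D ^ 2 := by positivity
  refine affine_not_interior (f := fun y => det2R (y - A) (C - A) * D)
    (n := (-(C.2 - A.2) * D, (C.1 - A.1) * D))
    (c := -(((C.1 - A.1) ^ 2 + (C.2 - A.2) ^ 2) * D ^ 2)) ?_ ?_ ?_ ?_
  · intro y t
    simp only [det2R, Prod.fst_sub, Prod.snd_sub, Prod.fst_add, Prod.snd_add,
      Prod.smul_fst, Prod.smul_snd, smul_eq_mul, hDdef]
    ring
  · have := sq_sum_pos (CA_ne hD)
    nlinarith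
  · intro y hy
    exact ((hull_iff_coords hD).1 hy).1
  · simp only [hx, zero_mul]

lemma not_interior_2 (hD : det2R (B - A) (C - A) ≠ 0)
    (hx : det2R (B - A) (x - A) = 0) :
    x ∉ interior (convexHull ℝ {A, B, C}) := by
  set D := det2R (B - A) (C - A) with hDdef
  have hD2 : 0 < D ^ 2 := by positivity
  refine affine_not_interior (f := fun y => det2R (B - A) (y - A) * D)
    (n := ((B.2 - A.2) * D, -(B.1 - A.1) * D))
    (c := -(((B.1 - A.1) ^ 2 + (B.2 - A.2) ^ 2) * D ^ 2)) ?_ ?_ ?_ ?_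
  · intro y t
    simp only [det2R, Prod.fst_sub, Prod.snd_sub, Prod.fst_add, Prod.snd_add,
      Prod.smul_fst, Prod.smul_snd, smul_eq_mul, hDdef]
    ring
  · have := sq_sum_pos (BA_ne hD)
    nlinarith
  · intro y hy
    exact ((hull_iff_coords hD).1 hy).2.1
  · simp only [hx, zero_mul]

lemma not_interior_3 (hD : det2R (B - A) (C - A) ≠ 0)
    (hx : det2R (x - A) (C - A) + det2R (B - A) (x - A) = det2R (B - A) (C - A)) :
    x ∉ interior (convexHull ℝ {A, B, C}) := by
  set D := det2R (B - A) (C - A) with hDdef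
  have hD2 : 0 < D ^ 2 := by positivity
  refine affine_not_interior
    (f := fun y => D ^ 2 - (det2R (y - A) (C - A) * D + det2R (B - A) (y - A) * D))
    (n := ((C.2 - B.2) * D, -(C.1 - B.1) * D))
    (c := -(((C.1 - B.1) ^ 2 + (C.2 - B.2) ^ 2) * D ^ 2)) ?_ ?_ ?_ ?_
  · intro y t
    simp only [det2R, Prod.fst_sub, Prod.snd_sub, Prod.fst_add, Prod.snd_add,
      Prod.smul_fst, Prod.smul_snd, smul_eq_mul, hDdef]
    ring
  · have := sq_sum_pos (CB_ne hD)
    nlinarith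
  · intro y hy
    have h := (hull_iff_coords hD).1 hy
    linarith [h.2.2]
  · rw [← add_mul, hx]
    ring

lemma pos_coords_interior (hD : det2R (B - A) (C - A) ≠ 0)
    (h1 : 0 < det2R (x - A) (C - A) * det2R (B - A) (C - A))
    (h2 : 0 < det2R (B - A) (x - A) * det2R (B - A) (C - A))
    (h3 : det2R (x - A) (C - A) * det2R (B - A) (C - A) +
        det2R (B - A) (x - A) * det2R (B - A) (C - A) < det2R (B - A) (C - A) ^ 2) :
    x ∈ interior (convexHull ℝ {A, B, C}) := by
  set D := det2R (B - A) (C - A) with hDdef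
  set U : Set (ℝ × ℝ) := {y | 0 < det2R (y - A) (C - A) * D ∧ 0 < det2R (B - A) (y - A) * D ∧
    det2R (y - A) (C - A) * D + det2R (B - A) (y - A) * D < D ^ 2} with hU
  have hUopen : IsOpen U := by
    have c1 : Continuous fun y : ℝ × ℝ => det2R (y - A) (C - A) * D := by
      simp only [det2R, Prod.fst_sub, Prod.snd_sub]
      fun_prop
    have c2 : Continuous fun y : ℝ × ℝ => det2R (B - A) (y - A) * D := by
      simp only [det2R, Prod.fst_sub, Prod.snd_sub]
      fun_prop
    exact (isOpen_lt continuous_const c1).inter ((isOpen_lt continuous_const c2).inter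
      (isOpen_lt (c1.add c2) continuous_const))
  have hUsub : U ⊆ convexHull ℝ {A, B, C} := by
    intro y hy
    exact (hull_iff_coords hD).2 ⟨le_of_lt hy.1, le_of_lt hy.2.1, le_of_lt hy.2.2⟩
  exact interior_maximal hUsub hUopen ⟨h1, h2, h3⟩
end


lemma toR_inj : Function.Injective toR := by
  rintro ⟨a1, a2⟩ ⟨b1, b2⟩ h
  simp only [toR, Prod.ext_iff] at h ⊢
  exact ⟨by exact_mod_cast h.1, by exact_mod_cast h.2⟩

lemma toR_sub (a b : ℤ × ℤ) : toR a - toR b = toR (a - b) := by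
  simp [toR, Prod.ext_iff]

lemma det2R_toR (u v : ℤ × ℤ) : det2R (toR u) (toR v) = (det2 u v : ℝ) := by
  simp [det2R, det2, toR]

lemma cramer_fst (u v w : ℤ × ℤ) :
    det2 u v * w.1 = det2 w v * u.1 + det2 u w * v.1 := by
  simp only [det2]; ring

lemma cramer_snd (u v w : ℤ × ℤ) :
    det2 u v * w.2 = det2 w v * u.2 + det2 u w * v.2 := by
  simp only [det2]; ring

lemma triPts_mem_iff {q w v p : ℤ × ℤ} (hD : det2 w v ≠ 0) :
    p ∈ triPts q (q + w) (q + v) ↔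
      0 ≤ det2 (p - q) v * det2 w v ∧ 0 ≤ det2 w (p - q) * det2 w v ∧
      det2 (p - q) v * det2 w v + det2 w (p - q) * det2 w v ≤ det2 w v ^ 2 := by
  have e1 : toR (q + w) - toR q = toR w := by rw [toR_sub]; congr 1; abel
  have e2 : toR (q + v) - toR q = toR v := by rw [toR_sub]; congr 1; abel
  have e3 : toR p - toR q = toR (p - q) := toR_sub p q
  have hD' : det2R (toR (q + w) - toR q) (toR (q + v) - toR q) ≠ 0 := by
    rw [e1, e2, det2R_toR]
    exact_mod_cast hD
  rw [triPts, Set.mem_setOf_eq, hull_iff_coords hD', e1, e2, e3,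
    det2R_toR, det2R_toR, det2R_toR]
  constructor
  · rintro ⟨h1, h2, h3⟩
    exact ⟨by exact_mod_cast h1, by exact_mod_cast h2, by exact_mod_cast h3⟩
  · rintro ⟨h1, h2, h3⟩
    exact ⟨by exact_mod_cast h1, by exact_mod_cast h2, by exact_mod_cast h3⟩


section
variable {q u v : ℤ × ℤ}

lemma det2_uu_v : det2 (u + u) v = 2 * det2 u v := by simp [det2]; ring
lemma det2_uu_u : det2 (u + u) u = 0 := by simp [det2]; ring
lemma det2_self (w : ℤ × ℤ) : det2 w w = 0 := by simp only [det2, Prod.fst_add, Prod.snd_add, Prod.fst_sub, Prod.snd_sub]; ring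
lemma det2_zero_left (w : ℤ × ℤ) : det2 0 w = 0 := by simp [det2]
lemma det2_zero_right (w : ℤ × ℤ) : det2 w 0 = 0 := by simp [det2]
lemma det2_u_uu : det2 u (u + u) = 0 := by simp only [det2, Prod.fst_add, Prod.snd_add, Prod.fst_sub, Prod.snd_sub]; ring

lemma unim_ne (hk : det2 u v * det2 u v = 1) :
    u ≠ 0 ∧ v ≠ 0 ∧ v ≠ u ∧ v ≠ u + u ∧ u + u ≠ 0 := by
  have h0 : det2 u v ≠ 0 := by intro h; rw [h] at hk; simp at hk
  refine ⟨?_, ?_, ?_, ?_, ?_⟩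
  · rintro rfl; exact h0 (by simp [det2])
  · rintro rfl; exact h0 (by simp [det2])
  · rintro rfl; exact h0 (by simp [det2]; ring)
  · rintro rfl; exact h0 (by simp [det2]; ring)
  · intro h
    have hu : u = 0 := by
      rcases u with ⟨u1, u2⟩
      simp only [Prod.ext_iff, Prod.fst_add, Prod.snd_add, Prod.fst_zero, Prod.snd_zero] at h ⊢
      omega
    rw [hu] at h0
    exact h0 (by simp [det2])

lemma triPts_eq (hk : det2 u v * det2 u v = 1) :
    triPts q (q + (u + u)) (q + v) = ({q, q + u, q + (u + u), q + v} : Set (ℤ × ℤ)) := by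
  have h2k : det2 (u + u) v ≠ 0 := by
    rw [det2_uu_v]; intro h
    have : det2 u v = 0 := by omega
    rw [this] at hk; simp at hk
  ext p
  rw [triPts_mem_iff h2k]
  constructor
  · rintro ⟨h1, h2, h3⟩
    have hwp : det2 (u + u) (p - q) = 2 * det2 u (p - q) := by
      simp only [det2, Prod.fst_add, Prod.snd_add, Prod.fst_sub, Prod.snd_sub]; ring
    simp only [hwp, show det2 (u + u) v = 2 * det2 u v from det2_uu_v] at h1 h2 h3
    set s := det2 (p - q) v with hs
    set t := det2 u (p - q) with ht
    have c1 : det2 u v * (p.1 - q.1) = s * u.1 + t * v.1 := by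
      have h := cramer_fst u v (p - q)
      simp only [Prod.fst_sub] at h
      rw [← hs, ← ht] at h
      exact h
    have c2 : det2 u v * (p.2 - q.2) = s * u.2 + t * v.2 := by
      have h := cramer_snd u v (p - q)
      simp only [Prod.snd_sub] at h
      rw [← hs, ← ht] at h
      exact h
    simp only [Set.mem_insert_iff, Set.mem_singleton_iff, Prod.ext_iff,
      Prod.fst_add, Prod.snd_add]
    rcases mul_self_eq_one_iff.1 hk with hk1 | hk1 <;> rw [hk1] at h1 h2 h3 c1 c2
    · have hc : (s = 0 ∧ t = 0) ∨ (s = 1 ∧ t = 0) ∨ (s = 2 ∧ t = 0) ∨ (s = 0 ∧ t = 1) := by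
        omega
      rcases hc with ⟨hs1, ht1⟩ | ⟨hs1, ht1⟩ | ⟨hs1, ht1⟩ | ⟨hs1, ht1⟩ <;>
        rw [hs1, ht1] at c1 c2 <;> omega
    · have hc : (s = 0 ∧ t = 0) ∨ (s = -1 ∧ t = 0) ∨ (s = -2 ∧ t = 0) ∨ (s = 0 ∧ t = -1) := by
        omega
      rcases hc with ⟨hs1, ht1⟩ | ⟨hs1, ht1⟩ | ⟨hs1, ht1⟩ | ⟨hs1, ht1⟩ <;>
        rw [hs1, ht1] at c1 c2 <;> omega
  · intro hp
    simp only [Set.mem_insert_iff, Set.mem_singleton_iff] at hp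
    rcases mul_self_eq_one_iff.1 hk with hk1 | hk1 <;>
    rcases hp with rfl | rfl | rfl | rfl <;>
    · simp only [add_sub_cancel_left, sub_self, det2_zero_left, det2_zero_right, det2_self,
        det2_uu_u, det2_u_uu, det2_uu_v, hk1]
      norm_num
end

lemma pts4_ncard (q : ℤ × ℤ) (hk : det2 u v * det2 u v = 1) :
    ({q, q + u, q + (u + u), q + v} : Set (ℤ × ℤ)).ncard = 4 := by
  obtain ⟨hu, hv, hvu, hvuu, huu⟩ := unim_ne hk
  have h1 : q ∉ ({q + u, q + (u + u), q + v} : Set (ℤ × ℤ)) := by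
    simp only [Set.mem_insert_iff, Set.mem_singleton_iff, left_eq_add]
    push_neg
    exact ⟨hu, huu, hv⟩
  have h2 : q + u ∉ ({q + (u + u), q + v} : Set (ℤ × ℤ)) := by
    simp only [Set.mem_insert_iff, Set.mem_singleton_iff, add_right_inj]
    push_neg
    refine ⟨fun h => hu ?_, fun h => hvu h.symm⟩
    · rcases u with ⟨u1, u2⟩
      simp only [Prod.ext_iff, Prod.fst_add, Prod.snd_add, Prod.fst_zero, Prod.snd_zero] at h ⊢
      omega
  have h3 : q + (u + u) ∉ ({q + v} : Set (ℤ × ℤ)) := by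
    simp only [Set.mem_singleton_iff, add_right_inj]
    exact fun h => hvuu h.symm
  rw [Set.ncard_insert_of_notMem h1, Set.ncard_insert_of_notMem h2,
    Set.ncard_insert_of_notMem h3, Set.ncard_singleton]

lemma not_interior_mid (q : ℤ × ℤ) (hk : det2 u v * det2 u v = 1) :
    toR (q + u) ∉ interior (convexHull ℝ {toR q, toR (q + (u + u)), toR (q + v)}) := by
  have e1 : toR (q + (u + u)) - toR q = toR (u + u) := by rw [toR_sub]; congr 1; abel
  have e2 : toR (q + v) - toR q = toR v := by rw [toR_sub]; congr 1; abel
  have e3 : toR (q + u) - toR q = toR u := by rw [toR_sub]; congr 1; abel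
  have hk0 : det2 u v ≠ 0 := by intro h; rw [h] at hk; simp at hk
  apply not_interior_2 (A := toR q)
  · rw [e1, e2, det2R_toR, det2_uu_v]
    intro h
    have h' : 2 * det2 u v = 0 := by exact_mod_cast h
    omega
  · rw [e1, e3, det2R_toR, det2_uu_u]
    norm_num

lemma isBorderTri_tool (q : ℤ × ℤ) (hk : det2 u v * det2 u v = 1) :
    IsBorderTri ({q, q + u, q + (u + u), q + v} : Set (ℤ × ℤ)) := by
  have hperm : ({q, q + u, q + (u + u), q + v} : Set (ℤ × ℤ))
      = {q, q + (u + u), q + v, q + u} := by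
    ext x
    simp only [Set.mem_insert_iff, Set.mem_singleton_iff]
    tauto
  have hk0 : det2 u v ≠ 0 := by intro h; rw [h] at hk; simp at hk
  refine ⟨q, q + (u + u), q + v, q + u, ?_, (triPts_eq hk).symm, hperm, pts4_ncard q hk,
    not_interior_mid q hk⟩
  simp only [add_sub_cancel_left, det2_uu_v]
  omega

lemma toolV {S : Set (ℤ × ℤ)} (hB : BStable S) (hk : det2 u v * det2 u v = 1)
    (h1 : q ∈ S) (h2 : q + u ∈ S) (h3 : q + (u + u) ∈ S) : q + v ∈ S := by
  set T : Set (ℤ × ℤ) := {q, q + u, q + (u + u), q + v} with hT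
  have hfin : T.Finite := Set.toFinite _
  have hne := hB T (isBorderTri_tool q hk)
  obtain ⟨hu, hv, hvu, hvuu, huu⟩ := unim_ne hk
  have hsub3 : ({q, q + u, q + (u + u)} : Set (ℤ × ℤ)) ⊆ T ∩ S := by
    intro x hx
    rcases hx with rfl | rfl | rfl
    · exact ⟨by simp [hT], h1⟩
    · exact ⟨by simp [hT], h2⟩
    · exact ⟨by simp [hT], h3⟩
  have h3card : ({q, q + u, q + (u + u)} : Set (ℤ × ℤ)).ncard = 3 := by
    have m1 : q ∉ ({q + u, q + (u + u)} : Set (ℤ × ℤ)) := by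
      simp only [Set.mem_insert_iff, Set.mem_singleton_iff, left_eq_add]
      push_neg
      exact ⟨hu, huu⟩
    have m2 : q + u ∉ ({q + (u + u)} : Set (ℤ × ℤ)) := by
      simp only [Set.mem_singleton_iff, add_right_inj]
      intro h
      apply hu
      rcases u with ⟨u1, u2⟩
      simp only [Prod.ext_iff, Prod.fst_add, Prod.snd_add, Prod.fst_zero, Prod.snd_zero] at h ⊢
      omega
    rw [Set.ncard_insert_of_notMem m1, Set.ncard_insert_of_notMem m2, Set.ncard_singleton]
  have hge : 3 ≤ (T ∩ S).ncard := by
    rw [← h3card]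
    exact Set.ncard_le_ncard hsub3 (hfin.subset Set.inter_subset_left)
  have hle : (T ∩ S).ncard ≤ 4 := by
    rw [← pts4_ncard q hk, ← hT]
    exact Set.ncard_le_ncard Set.inter_subset_left hfin
  have h4 : (T ∩ S).ncard = 4 := by omega
  have hTeq : T ∩ S = T := by
    apply Set.eq_of_subset_of_ncard_le Set.inter_subset_left _ hfin
    rw [h4, hT, pts4_ncard q hk]
  have : q + v ∈ T := by simp [hT]
  rw [← hTeq] at this
  exact this.2

lemma smul_fst' (m : ℤ) (w : ℤ × ℤ) : (m • w).1 = m * w.1 := rfl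
lemma smul_snd' (m : ℤ) (w : ℤ × ℤ) : (m • w).2 = m * w.2 := rfl

lemma prop_univ {S : Set (ℤ × ℤ)} {p u v : ℤ × ℤ} (hB : BStable S)
    (hk : det2 u v * det2 u v = 1)
    (h0 : p ∈ S) (h1 : p + u ∈ S) (h2 : p + (u + u) ∈ S) : S = Set.univ := by
  have step : ∀ r : ℤ × ℤ, r ∈ S → r + u ∈ S → r + (u + u) ∈ S →
      ∀ m ε : ℤ, ε = 1 ∨ ε = -1 → r + (m • u + ε • v) ∈ S := by
    intro r hr hr1 hr2 m ε hε
    have hdet : det2 u (m • u + ε • v) = ε * det2 u v := by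
      simp only [det2, Prod.fst_add, Prod.snd_add, smul_fst', smul_snd']
      ring
    have hk' : det2 u (m • u + ε • v) * det2 u (m • u + ε • v) = 1 := by
      rw [hdet]
      rcases hε with rfl | rfl <;> nlinarith
    exact toolV hB hk' hr hr1 hr2
  have key : ∀ n : ℤ, (∀ m : ℤ, p + (m • u + n • v) ∈ S) →
      ∀ m : ℤ, ∀ ε : ℤ, ε = 1 ∨ ε = -1 → p + (m • u + (n + ε) • v) ∈ S := by
    intro n hn m ε hε
    have hr0 : p + n • v ∈ S := by
      have := hn 0
      rwa [zero_smul, zero_add] at this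
    have hr1 : p + n • v + u ∈ S := by
      have := hn 1
      rwa [show p + ((1:ℤ) • u + n • v) = p + n • v + u by rw [one_smul]; abel] at this
    have hr2 : p + n • v + (u + u) ∈ S := by
      have := hn 2
      rwa [show p + ((2:ℤ) • u + n • v) = p + n • v + (u + u) by rw [two_smul]; abel] at this
    have := step (p + n • v) hr0 hr1 hr2 m ε hε
    rwa [show p + n • v + (m • u + ε • v) = p + (m • u + (n + ε) • v) by
      rw [add_smul]; abel] at this
  have row1 : ∀ m : ℤ, p + (m • u + (1:ℤ) • v) ∈ S := by
    intro m
    exact step p h0 h1 h2 m 1 (Or.inl rfl)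
  have row0 : ∀ m : ℤ, p + (m • u + (0:ℤ) • v) ∈ S := by
    intro m
    have := key 1 row1 m (-1) (Or.inr rfl)
    rwa [show (1 + -1 : ℤ) = 0 by ring] at this
  have rows : ∀ n : ℤ, ∀ m : ℤ, p + (m • u + n • v) ∈ S := by
    intro n
    induction n using Int.induction_on with
    | zero => exact row0
    | succ k ih =>
      intro m
      exact key k ih m 1 (Or.inl rfl)
    | pred k ih =>
      intro m
      have := key (-k) ih m (-1) (Or.inr rfl)
      rwa [show (-(k:ℤ) + -1) = -(k:ℤ) - 1 by ring] at this
  ext z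
  simp only [Set.mem_univ, iff_true]
  set s := det2 (z - p) v with hs
  set t := det2 u (z - p) with ht
  have c1 : det2 u v * (z.1 - p.1) = s * u.1 + t * v.1 := by
    have h := cramer_fst u v (z - p)
    simp only [Prod.fst_sub] at h
    rw [← hs, ← ht] at h
    exact h
  have c2 : det2 u v * (z.2 - p.2) = s * u.2 + t * v.2 := by
    have h := cramer_snd u v (z - p)
    simp only [Prod.snd_sub] at h
    rw [← hs, ← ht] at h
    exact h
  rcases mul_self_eq_one_iff.1 hk with hk1 | hk1 <;> rw [hk1] at c1 c2
  · have hz : z = p + (s • u + t • v) := by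
      rw [Prod.ext_iff]
      constructor
      · simp only [Prod.fst_add, smul_fst']
        omega
      · simp only [Prod.snd_add, smul_snd']
        omega
    rw [hz]
    exact rows t s
  · have hz : z = p + ((-s) • u + (-t) • v) := by
      rw [Prod.ext_iff]
      constructor
      · simp only [Prod.fst_add, smul_fst', neg_mul]
        omega
      · simp only [Prod.snd_add, smul_snd', neg_mul]
        omega
    rw [hz]
    exact rows (-t) (-s)


lemma detR_eq (a b c : ℤ × ℤ) :
    det2R (toR b - toR a) (toR c - toR a) = (det2 (b - a) (c - a) : ℝ) := by
  rw [toR_sub, toR_sub, det2R_toR]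

lemma mid_of_seg {a b c d : ℤ × ℤ} (hdet : det2 (b - a) (c - a) ≠ 0)
    (hT : triPts a b c = {a, b, c, d}) (hdb : d ≠ b) (hdc : d ≠ c)
    (hseg : toR d ∈ convexHull ℝ {toR b, toR c}) : b + c = d + d := by
  rw [convexHull_pair] at hseg
  obtain ⟨β, γ, hβ, hγ, hsum, hcomb⟩ := hseg
  have hd1 : β * (b.1 : ℝ) + γ * (c.1 : ℝ) = (d.1 : ℝ) := by
    have := congrArg Prod.fst hcomb
    simpa [toR, Prod.smul_fst, smul_eq_mul] using this
  have hd2 : β * (b.2 : ℝ) + γ * (c.2 : ℝ) = (d.2 : ℝ) := by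
    have := congrArg Prod.snd hcomb
    simpa [toR, Prod.smul_snd, smul_eq_mul] using this
  have hβ' : β = 1 - γ := by linarith
  rw [hβ'] at hd1 hd2
  have hγ0 : γ ≠ 0 := by
    intro h
    rw [h] at hd1 hd2
    apply hdb
    have e1 : (d.1 : ℝ) = (b.1 : ℝ) := by linarith
    have e2 : (d.2 : ℝ) = (b.2 : ℝ) := by linarith
    rw [Prod.ext_iff]
    exact ⟨by exact_mod_cast e1, by exact_mod_cast e2⟩
  have hγ1 : γ ≠ 1 := by
    intro h
    rw [h] at hd1 hd2
    apply hdc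
    have e1 : (d.1 : ℝ) = (c.1 : ℝ) := by linarith
    have e2 : (d.2 : ℝ) = (c.2 : ℝ) := by linarith
    rw [Prod.ext_iff]
    exact ⟨by exact_mod_cast e1, by exact_mod_cast e2⟩
  -- helper to handle the collinear case
  have collin : ∀ (x1 x2 : ℝ), ((a.1 : ℝ) = x1) → ((a.2 : ℝ) = x2) →
      (∀ δ : ℝ, True) → True := fun _ _ _ _ _ => trivial
  by_cases hhalf : γ ≤ 1 / 2
  · set e : ℤ × ℤ := d + d - b with hedef
    have he_mem : e ∈ triPts a b c := by
      show toR e ∈ convexHull ℝ {toR a, toR b, toR c}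
      refine mem_hull3.2 ⟨0, 1 - 2 * γ, 2 * γ, le_refl 0, by linarith, by linarith, by ring, ?_⟩
      rw [Prod.ext_iff]
      constructor
      · simp only [toR, hedef, Prod.smul_fst, Prod.fst_add, Prod.fst_sub, smul_eq_mul]
        push_cast
        linarith
      · simp only [toR, hedef, Prod.smul_snd, Prod.snd_add, Prod.snd_sub, smul_eq_mul]
        push_cast
        linarith
    rw [hT] at he_mem
    rcases he_mem with h | h | h | h
    · -- e = a : collinear, contradiction
      exfalso
      apply hdet
      have hA1 : (a.1 : ℝ) = 2 * (d.1 : ℝ) - b.1 := by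
        have := congrArg Prod.fst h
        simp only [hedef, Prod.fst_add, Prod.fst_sub] at this
        push_cast [← this]
        ring
      have hA2 : (a.2 : ℝ) = 2 * (d.2 : ℝ) - b.2 := by
        have := congrArg Prod.snd h
        simp only [hedef, Prod.snd_add, Prod.snd_sub] at this
        push_cast [← this]
        ring
      have : (det2 (b - a) (c - a) : ℝ) = 0 := by
        rw [← detR_eq]
        simp only [det2R, toR, Prod.fst_sub, Prod.snd_sub]
        rw [hA1, hA2, ← hd1, ← hd2]
        ring
      exact_mod_cast this
    · -- e = b : d = b, contradiction
      exfalso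
      apply hdb
      have h1 := congrArg Prod.fst h
      have h2 := congrArg Prod.snd h
      simp only [hedef, Prod.fst_add, Prod.fst_sub, Prod.snd_add, Prod.snd_sub] at h1 h2
      rw [Prod.ext_iff]
      omega
    · -- e = c : done
      have h1 := congrArg Prod.fst h
      have h2 := congrArg Prod.snd h
      simp only [hedef, Prod.fst_add, Prod.fst_sub, Prod.snd_add, Prod.snd_sub] at h1 h2
      rw [Prod.ext_iff]
      simp only [Prod.fst_add, Prod.snd_add]
      omega
    · -- e = d : d = b, contradiction
      exfalso
      apply hdb
      have h1 := congrArg Prod.fst h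
      have h2 := congrArg Prod.snd h
      simp only [hedef, Prod.fst_add, Prod.fst_sub, Prod.snd_add, Prod.snd_sub] at h1 h2
      rw [Prod.ext_iff]
      omega
  · set e : ℤ × ℤ := d + d - c with hedef
    have he_mem : e ∈ triPts a b c := by
      show toR e ∈ convexHull ℝ {toR a, toR b, toR c}
      refine mem_hull3.2 ⟨0, 2 - 2 * γ, 2 * γ - 1, le_refl 0, by linarith, by linarith,
        by ring, ?_⟩
      rw [Prod.ext_iff]
      constructor
      · simp only [toR, hedef, Prod.smul_fst, Prod.fst_add, Prod.fst_sub, smul_eq_mul]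
        push_cast
        linarith
      · simp only [toR, hedef, Prod.smul_snd, Prod.snd_add, Prod.snd_sub, smul_eq_mul]
        push_cast
        linarith
    rw [hT] at he_mem
    rcases he_mem with h | h | h | h
    · exfalso
      apply hdet
      have hA1 : (a.1 : ℝ) = 2 * (d.1 : ℝ) - c.1 := by
        have := congrArg Prod.fst h
        simp only [hedef, Prod.fst_add, Prod.fst_sub] at this
        push_cast [← this]
        ring
      have hA2 : (a.2 : ℝ) = 2 * (d.2 : ℝ) - c.2 := by
        have := congrArg Prod.snd h
        simp only [hedef, Prod.snd_add, Prod.snd_sub] at this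
        push_cast [← this]
        ring
      have : (det2 (b - a) (c - a) : ℝ) = 0 := by
        rw [← detR_eq]
        simp only [det2R, toR, Prod.fst_sub, Prod.snd_sub]
        rw [hA1, hA2, ← hd1, ← hd2]
        ring
      exact_mod_cast this
    · have h1 := congrArg Prod.fst h
      have h2 := congrArg Prod.snd h
      simp only [hedef, Prod.fst_add, Prod.fst_sub, Prod.snd_add, Prod.snd_sub] at h1 h2
      rw [Prod.ext_iff]
      simp only [Prod.fst_add, Prod.snd_add]
      omega
    · exfalso
      apply hdc
      have h1 := congrArg Prod.fst h
      have h2 := congrArg Prod.snd h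
      simp only [hedef, Prod.fst_add, Prod.fst_sub, Prod.snd_add, Prod.snd_sub] at h1 h2
      rw [Prod.ext_iff]
      omega
    · exfalso
      apply hdc
      have h1 := congrArg Prod.fst h
      have h2 := congrArg Prod.snd h
      simp only [hedef, Prod.fst_add, Prod.fst_sub, Prod.snd_add, Prod.snd_sub] at h1 h2
      rw [Prod.ext_iff]
      omega


lemma cross_z {u z : ℤ × ℤ} {A B : ℤ} (E1 : A * u.1 + B * z.1 = 0)
    (E2 : A * u.2 + B * z.2 = 0) : A * det2 u z = 0 := by
  simp only [det2]; linear_combination z.2 * E1 - z.1 * E2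

lemma cross_u {u z : ℤ × ℤ} {A B : ℤ} (E1 : A * u.1 + B * z.1 = 0)
    (E2 : A * u.2 + B * z.2 = 0) : B * det2 u z = 0 := by
  simp only [det2]; linear_combination (-u.2) * E1 + u.1 * E2

lemma coords_forced {u z w0 : ℤ × ℤ} {k s t lu lz : ℤ} (hk : k = det2 u z) (hk0 : k ≠ 0)
    (hw1 : k * w0.1 = s * u.1 + t * z.1) (hw2 : k * w0.2 = s * u.2 + t * z.2)
    (hc1 : w0.1 = lu * u.1 + lz * z.1) (hc2 : w0.2 = lu * u.2 + lz * z.2) :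
    s = k * lu ∧ t = k * lz := by
  have E1 : (s - k * lu) * u.1 + (t - k * lz) * z.1 = 0 := by linear_combination k * hc1 - hw1
  have E2 : (s - k * lu) * u.2 + (t - k * lz) * z.2 = 0 := by linear_combination k * hc2 - hw2
  have hs := cross_z E1 E2
  have ht := cross_u E1 E2
  rw [← hk] at hs ht
  rcases mul_eq_zero.1 hs with h | h
  · rcases mul_eq_zero.1 ht with h' | h'
    · constructor <;> omega
    · exact absurd h' hk0
  · exact absurd h hk0

/-- membership of `d + w0` where `k•w0 = s•u + t•z`, `0 ≤ s,t`, `s+t ≤ k`. -/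
lemma mem_hull_w0 {d u z w0 : ℤ × ℤ} {k s t : ℤ} (hkpos : 0 < k)
    (hw1 : k * w0.1 = s * u.1 + t * z.1) (hw2 : k * w0.2 = s * u.2 + t * z.2)
    (hs : 0 ≤ s) (ht : 0 ≤ t) (hst : s + t ≤ k) :
    toR (d + w0) ∈ convexHull ℝ {toR (d - u), toR (d + u), toR (d + z)} := by
  have hkR : (0:ℝ) < (k:ℝ) := by exact_mod_cast hkpos
  have hsR : (0:ℝ) ≤ (s:ℝ) := by exact_mod_cast hs
  have htR : (0:ℝ) ≤ (t:ℝ) := by exact_mod_cast ht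
  have hstR : (s:ℝ) + t ≤ k := by exact_mod_cast hst
  have hw1R : (k:ℝ) * (w0.1:ℝ) = s * u.1 + t * z.1 := by exact_mod_cast hw1
  have hw2R : (k:ℝ) * (w0.2:ℝ) = s * u.2 + t * z.2 := by exact_mod_cast hw2
  refine mem_hull3.2 ⟨((k:ℝ) - t - s) / (2*k), ((k:ℝ) - t + s) / (2*k), (t:ℝ)/k,
    div_nonneg (by linarith) (by positivity), div_nonneg (by linarith) (by positivity),
    div_nonneg htR hkR.le, by field_simp; ring, ?_⟩
  rw [Prod.ext_iff]
  constructor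
  · simp only [toR, Prod.fst_add, Prod.smul_fst, Prod.fst_sub, smul_eq_mul]
    push_cast
    field_simp
    ring_nf
    linear_combination (-2:ℝ) * hw1R
  · simp only [toR, Prod.snd_add, Prod.smul_snd, Prod.snd_sub, smul_eq_mul]
    push_cast
    field_simp
    ring_nf
    linear_combination (-2:ℝ) * hw2R

lemma nopt {d u z : ℤ × ℤ} (hk2 : 2 ≤ det2 u z)
    (hsub : ∀ p : ℤ × ℤ, toR p ∈ convexHull ℝ {toR (d - u), toR (d + u), toR (d + z)} →
      p = d - u ∨ p = d + u ∨ p = d + z ∨ p = d) : False := by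
  set k := det2 u z with hkdef
  have hk0 : k ≠ 0 := by omega
  have hkpos : 0 < k := by omega
  have hw : ∃ w : ℤ × ℤ, ¬(k ∣ det2 w z) ∨ ¬(k ∣ det2 u w) := by
    by_contra h
    push_neg at h
    obtain ⟨h1, h1'⟩ := h (1, 0)
    obtain ⟨h2, h2'⟩ := h (0, 1)
    simp only [det2] at h1 h1' h2 h2'
    norm_num at h1 h1' h2 h2'
    obtain ⟨a, ha⟩ := h2'
    obtain ⟨b, hb⟩ := h1'
    obtain ⟨c, hc⟩ := h2
    obtain ⟨e, he⟩ := h1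
    have hdz : det2 u z = k * k * (a * e - b * c) := by
      simp only [det2]
      rw [ha, hb, hc, he]
      ring
    have hkk : k * (k * (a * e - b * c)) = k * 1 := by
      rw [mul_one, ← mul_assoc]
      exact (hkdef.trans hdz).symm
    have := mul_left_cancel₀ hk0 hkk
    have := Int.le_of_dvd one_pos ⟨a * e - b * c, this.symm⟩
    omega
  obtain ⟨w, hw⟩ := hw
  set s0 := det2 w z with hs0def
  set t0 := det2 u w with ht0def
  set s := s0 % k with hsdef
  set t := t0 % k with htdef
  have hs0 : 0 ≤ s := Int.emod_nonneg s0 hk0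
  have hsk : s < k := Int.emod_lt_of_pos s0 hkpos
  have ht0 : 0 ≤ t := Int.emod_nonneg t0 hk0
  have htk : t < k := Int.emod_lt_of_pos t0 hkpos
  have hnot : ¬(s = 0 ∧ t = 0) := by
    rintro ⟨h1, h2⟩
    rcases hw with hw | hw
    · exact hw (Int.dvd_of_emod_eq_zero (by rw [← hsdef]; exact h1))
    · exact hw (Int.dvd_of_emod_eq_zero (by rw [← htdef]; exact h2))
  set w0 : ℤ × ℤ := w - (s0 / k) • u - (t0 / k) • z with hw0def
  have hes : s = s0 - k * (s0 / k) := by rw [hsdef]; exact Int.emod_def s0 k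
  have het : t = t0 - k * (t0 / k) := by rw [htdef]; exact Int.emod_def t0 k
  have hcomp1 : w0.1 = w.1 - s0 / k * u.1 - t0 / k * z.1 := by
    rw [hw0def]; simp only [Prod.fst_sub, smul_fst']
  have hcomp2 : w0.2 = w.2 - s0 / k * u.2 - t0 / k * z.2 := by
    rw [hw0def]; simp only [Prod.snd_sub, smul_snd']
  have c1 : k * w.1 = s0 * u.1 + t0 * z.1 := by
    rw [hkdef, hs0def, ht0def]; exact cramer_fst u z w
  have c2 : k * w.2 = s0 * u.2 + t0 * z.2 := by
    rw [hkdef, hs0def, ht0def]; exact cramer_snd u z w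
  have hw1 : k * w0.1 = s * u.1 + t * z.1 := by
    linear_combination k * hcomp1 + c1 - u.1 * hes - z.1 * het
  have hw2 : k * w0.2 = s * u.2 + t * z.2 := by
    linear_combination k * hcomp2 + c2 - u.2 * hes - z.2 * het
  by_cases hcase : s + t ≤ k
  · have mem := mem_hull_w0 (d := d) hkpos hw1 hw2 hs0 ht0 hcase
    rcases hsub _ mem with h | h | h | h
    all_goals {
      have e1 := congrArg Prod.fst h
      have e2 := congrArg Prod.snd h
      simp only [Prod.fst_add, Prod.snd_add, Prod.fst_sub, Prod.snd_sub] at e1 e2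
      first
      | (have hc1 : w0.1 = (-1) * u.1 + 0 * z.1 := by omega
         have hc2 : w0.2 = (-1) * u.2 + 0 * z.2 := by omega
         obtain ⟨hA, hB⟩ := coords_forced hkdef hk0 hw1 hw2 hc1 hc2
         omega)
      | (have hc1 : w0.1 = 1 * u.1 + 0 * z.1 := by omega
         have hc2 : w0.2 = 1 * u.2 + 0 * z.2 := by omega
         obtain ⟨hA, hB⟩ := coords_forced hkdef hk0 hw1 hw2 hc1 hc2
         omega)
      | (have hc1 : w0.1 = 0 * u.1 + 1 * z.1 := by omega
         have hc2 : w0.2 = 0 * u.2 + 1 * z.2 := by omega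
         obtain ⟨hA, hB⟩ := coords_forced hkdef hk0 hw1 hw2 hc1 hc2
         omega)
      | (have hc1 : w0.1 = 0 * u.1 + 0 * z.1 := by omega
         have hc2 : w0.2 = 0 * u.2 + 0 * z.2 := by omega
         obtain ⟨hA, hB⟩ := coords_forced hkdef hk0 hw1 hw2 hc1 hc2
         omega)
    }
  · set w1 : ℤ × ℤ := u + z - w0 with hw1def
    have hw1' : k * w1.1 = (k - s) * u.1 + (k - t) * z.1 := by
      rw [hw1def]; simp only [Prod.fst_sub, Prod.fst_add]
      linear_combination -hw1
    have hw2' : k * w1.2 = (k - s) * u.2 + (k - t) * z.2 := by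
      rw [hw1def]; simp only [Prod.snd_sub, Prod.snd_add]
      linear_combination -hw2
    have mem := mem_hull_w0 (d := d) hkpos hw1' hw2' (by omega) (by omega) (by omega)
    rcases hsub _ mem with h | h | h | h
    all_goals {
      have e1 := congrArg Prod.fst h
      have e2 := congrArg Prod.snd h
      simp only [hw1def, Prod.fst_add, Prod.snd_add, Prod.fst_sub, Prod.snd_sub] at e1 e2
      first
      | (have hc1 : w1.1 = (-1) * u.1 + 0 * z.1 := by rw [hw1def]; simp only [Prod.fst_sub, Prod.fst_add]; omega
         have hc2 : w1.2 = (-1) * u.2 + 0 * z.2 := by rw [hw1def]; simp only [Prod.snd_sub, Prod.snd_add]; omega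
         obtain ⟨hA, hB⟩ := coords_forced hkdef hk0 hw1' hw2' hc1 hc2
         omega)
      | (have hc1 : w1.1 = 1 * u.1 + 0 * z.1 := by rw [hw1def]; simp only [Prod.fst_sub, Prod.fst_add]; omega
         have hc2 : w1.2 = 1 * u.2 + 0 * z.2 := by rw [hw1def]; simp only [Prod.snd_sub, Prod.snd_add]; omega
         obtain ⟨hA, hB⟩ := coords_forced hkdef hk0 hw1' hw2' hc1 hc2
         omega)
      | (have hc1 : w1.1 = 0 * u.1 + 1 * z.1 := by rw [hw1def]; simp only [Prod.fst_sub, Prod.fst_add]; omega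
         have hc2 : w1.2 = 0 * u.2 + 1 * z.2 := by rw [hw1def]; simp only [Prod.snd_sub, Prod.snd_add]; omega
         obtain ⟨hA, hB⟩ := coords_forced hkdef hk0 hw1' hw2' hc1 hc2
         omega)
      | (have hc1 : w1.1 = 0 * u.1 + 0 * z.1 := by rw [hw1def]; simp only [Prod.fst_sub, Prod.fst_add]; omega
         have hc2 : w1.2 = 0 * u.2 + 0 * z.2 := by rw [hw1def]; simp only [Prod.snd_sub, Prod.snd_add]; omega
         obtain ⟨hA, hB⟩ := coords_forced hkdef hk0 hw1' hw2' hc1 hc2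
         omega)
    }


/-- uniqueness of barycentric coordinates and edge membership -/
lemma seg_of_beta_zero {A B C x : ℝ × ℝ} (hD : det2R (B - A) (C - A) ≠ 0)
    (hx : x ∈ convexHull ℝ {A, B, C}) (h0 : det2R (x - A) (C - A) = 0) :
    x ∈ convexHull ℝ {A, C} := by
  obtain ⟨α, β, γ, hα, hβ, hγ, hsum, hcomb⟩ := mem_hull3.1 hx
  have hα' : α = 1 - β - γ := by linarith
  subst hα'
  have hβ0 : β = 0 := by
    have := coord_beta A B C β γ
    rw [hcomb, h0] at this
    have := mul_eq_zero.1 this.symm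
    tauto
  rw [convexHull_pair]
  refine ⟨1 - γ, γ, by linarith, hγ, by ring, ?_⟩
  rw [← hcomb, hβ0]
  simp only [zero_smul, sub_zero, add_zero, zero_add]
lemma seg_of_gamma_zero {A B C x : ℝ × ℝ} (hD : det2R (B - A) (C - A) ≠ 0)
    (hx : x ∈ convexHull ℝ {A, B, C}) (h0 : det2R (B - A) (x - A) = 0) :
    x ∈ convexHull ℝ {A, B} := by
  obtain ⟨α, β, γ, hα, hβ, hγ, hsum, hcomb⟩ := mem_hull3.1 hx
  have hα' : α = 1 - β - γ := by linarith
  subst hα'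
  have hγ0 : γ = 0 := by
    have := coord_gamma A B C β γ
    rw [hcomb, h0] at this
    have := mul_eq_zero.1 this.symm
    tauto
  rw [convexHull_pair]
  refine ⟨1 - β, β, by linarith, hβ, by ring, ?_⟩
  rw [← hcomb, hγ0]
  simp only [zero_smul, sub_zero, add_zero, zero_add]
lemma seg_of_alpha_zero {A B C x : ℝ × ℝ} (hD : det2R (B - A) (C - A) ≠ 0)
    (hx : x ∈ convexHull ℝ {A, B, C})
    (h0 : det2R (x - A) (C - A) + det2R (B - A) (x - A) = det2R (B - A) (C - A)) :
    x ∈ convexHull ℝ {B, C} := by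
  obtain ⟨α, β, γ, hα, hβ, hγ, hsum, hcomb⟩ := mem_hull3.1 hx
  have hα' : α = 1 - β - γ := by linarith
  subst hα'
  have hβγ : β + γ = 1 := by
    have h1 := coord_beta A B C β γ
    have h2 := coord_gamma A B C β γ
    rw [hcomb] at h1 h2
    rw [h1, h2] at h0
    have : (β + γ - 1) * det2R (B - A) (C - A) = 0 := by linarith
    rcases mul_eq_zero.1 this with h | h
    · linarith
    · exact absurd h hD
  rw [convexHull_pair]
  refine ⟨β, γ, hβ, hγ, hβγ, ?_⟩
  rw [← hcomb]
  rw [show (1:ℝ) - β - γ = 0 by linarith]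
  simp only [zero_smul, zero_add]

lemma det2_neg_left (u z : ℤ × ℤ) : det2 (-u) z = -det2 u z := by
  simp only [det2, Prod.fst_neg, Prod.snd_neg]; ring

lemma empty_tri {a b c d : ℤ × ℤ} (hdet : det2 (b - a) (c - a) ≠ 0)
    (hT : triPts a b c = {a, b, c, d}) (hmid : b + c = d + d) :
    det2 (d - b) (a - d) * det2 (d - b) (a - d) = 1 := by
  set u : ℤ × ℤ := d - b with hu
  set z : ℤ × ℤ := a - d with hz
  have hb : d - u = b := by rw [hu]; abel
  have hc : d + u = c := by
    rw [hu, Prod.ext_iff] at *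
    simp only [Prod.fst_add, Prod.snd_add, Prod.fst_sub, Prod.snd_sub] at *
    omega
  have ha : d + z = a := by rw [hz]; abel
  have hk0 : det2 u z ≠ 0 := by
    intro h
    apply hdet
    have : det2 (b - a) (c - a) = 2 * det2 u z := by
      rw [hu, hz]
      simp only [det2, Prod.fst_sub, Prod.snd_sub]
      have hc1 : c.1 = d.1 + d.1 - b.1 := by
        have := congrArg Prod.fst hmid
        simp only [Prod.fst_add] at this; omega
      have hc2 : c.2 = d.2 + d.2 - b.2 := by
        have := congrArg Prod.snd hmid
        simp only [Prod.snd_add] at this; omega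
      rw [hc1, hc2]; ring
    rw [this, h]; ring
  have hsub : ∀ p : ℤ × ℤ, toR p ∈ convexHull ℝ {toR (d - u), toR (d + u), toR (d + z)} →
      p = d - u ∨ p = d + u ∨ p = d + z ∨ p = d := by
    intro p hp
    rw [hb, hc, ha] at hp
    have hsets : ({toR b, toR c, toR a} : Set (ℝ × ℝ)) = {toR a, toR b, toR c} := by
      ext y; simp only [Set.mem_insert_iff, Set.mem_singleton_iff]; tauto
    rw [hsets] at hp
    have : p ∈ triPts a b c := hp
    rw [hT] at this
    rw [hb, hc, ha]
    rcases this with h | h | h | h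
    · exact Or.inr (Or.inr (Or.inl h))
    · exact Or.inl h
    · exact Or.inr (Or.inl h)
    · exact Or.inr (Or.inr (Or.inr h))
  rcases lt_trichotomy (det2 u z) 0 with hneg | hzero | hpos
  · -- k < 0 : apply nopt with -u
    by_contra hne
    have hk2 : 2 ≤ det2 (-u) z := by
      rw [det2_neg_left]
      rcases eq_or_lt_of_le (by omega : det2 u z ≤ -1) with h | h
      · exfalso; apply hne; rw [h]; norm_num
      · omega
    apply nopt hk2
    intro p hp
    have e1 : d - -u = d + u := by abel
    have e2 : d + -u = d - u := by abel
    rw [e1, e2] at hp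
    have hsets : ({toR (d + u), toR (d - u), toR (d + z)} : Set (ℝ × ℝ))
        = {toR (d - u), toR (d + u), toR (d + z)} := by
      ext y; simp only [Set.mem_insert_iff, Set.mem_singleton_iff]; tauto
    rw [hsets] at hp
    rcases hsub p hp with h | h | h | h
    · exact Or.inr (Or.inl (by rw [e2]; exact h))
    · exact Or.inl (by rw [e1]; exact h)
    · exact Or.inr (Or.inr (Or.inl h))
    · exact Or.inr (Or.inr (Or.inr h))
  · exact absurd hzero hk0
  · by_contra hne
    have hk2 : 2 ≤ det2 u z := by
      rcases eq_or_lt_of_le (by omega : 1 ≤ det2 u z) with h | h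
      · exfalso; apply hne; rw [← h]; norm_num
      · omega
    exact nopt hk2 hsub

lemma three_ncard_le (x y z : ℤ × ℤ) : ({x, y, z} : Set (ℤ × ℤ)).ncard ≤ 3 := by
  calc ({x, y, z} : Set (ℤ × ℤ)).ncard ≤ ({y, z} : Set (ℤ × ℤ)).ncard + 1 :=
        Set.ncard_insert_le _ _
    _ ≤ (({z} : Set (ℤ × ℤ)).ncard + 1) + 1 := by
        have := Set.ncard_insert_le y ({z} : Set (ℤ × ℤ))
        omega
    _ ≤ 3 := by rw [Set.ncard_singleton]

lemma ncard4_ne {a b c d : ℤ × ℤ} (h4 : ({a, b, c, d} : Set (ℤ × ℤ)).ncard = 4) :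
    a ≠ b ∧ a ≠ c ∧ a ≠ d ∧ b ≠ c ∧ b ≠ d ∧ c ≠ d := by
  refine ⟨?_, ?_, ?_, ?_, ?_, ?_⟩ <;> intro h <;> rw [h] at h4
  · rw [show ({b, b, c, d} : Set (ℤ × ℤ)) = {b, c, d} by ext x; simp only [Set.mem_insert_iff, Set.mem_singleton_iff]; tauto] at h4
    have := three_ncard_le b c d; omega
  · rw [show ({c, b, c, d} : Set (ℤ × ℤ)) = {c, b, d} by ext x; simp only [Set.mem_insert_iff, Set.mem_singleton_iff]; tauto] at h4
    have := three_ncard_le c b d; omega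
  · rw [show ({d, b, c, d} : Set (ℤ × ℤ)) = {d, b, c} by ext x; simp only [Set.mem_insert_iff, Set.mem_singleton_iff]; tauto] at h4
    have := three_ncard_le d b c; omega
  · rw [show ({a, c, c, d} : Set (ℤ × ℤ)) = {a, c, d} by ext x; simp only [Set.mem_insert_iff, Set.mem_singleton_iff]; tauto] at h4
    have := three_ncard_le a c d; omega
  · rw [show ({a, d, c, d} : Set (ℤ × ℤ)) = {a, d, c} by ext x; simp only [Set.mem_insert_iff, Set.mem_singleton_iff]; tauto] at h4
    have := three_ncard_le a d c; omega
  · rw [show ({a, b, d, d} : Set (ℤ × ℤ)) = {a, b, d} by ext x; simp only [Set.mem_insert_iff, Set.mem_singleton_iff]; tauto] at h4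
    have := three_ncard_le a b d; omega

lemma det2_add_self_right (u z : ℤ × ℤ) : det2 u (z + u) = det2 u z := by
  simp only [det2, Prod.fst_add, Prod.snd_add]; ring

lemma seed {S T : Set (ℤ × ℤ)} (hTri : IsBorderTri T) (hTS : T ⊆ S) :
    ∃ p u v : ℤ × ℤ, det2 u v * det2 u v = 1 ∧ p ∈ S ∧ p + u ∈ S ∧ p + (u + u) ∈ S := by
  obtain ⟨a, b, c, d, hdet, hT1, hT2, h4, hint⟩ := hTri
  rw [hT2] at h4
  obtain ⟨hab, hac, had, hbc, hbd, hcd⟩ := ncard4_ne h4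
  have hTeq : triPts a b c = {a, b, c, d} := hT1.symm.trans hT2
  have haS : a ∈ S := hTS (by rw [hT2]; simp)
  have hbS : b ∈ S := hTS (by rw [hT2]; simp)
  have hcS : c ∈ S := hTS (by rw [hT2]; simp)
  have hdS : d ∈ S := hTS (by rw [hT2]; simp)
  have hd_hull : toR d ∈ convexHull ℝ {toR a, toR b, toR c} := by
    have hdT : d ∈ T := by rw [hT2]; simp
    rw [hT1] at hdT
    exact hdT
  have hDR : det2R (toR b - toR a) (toR c - toR a) ≠ 0 := by
    rw [detR_eq]
    exact_mod_cast hdet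
  obtain ⟨h1, h2, h3⟩ := (hull_iff_coords hDR).1 hd_hull
  have hdeg : det2R (toR d - toR a) (toR c - toR a) = 0 ∨
      det2R (toR b - toR a) (toR d - toR a) = 0 ∨
      det2R (toR d - toR a) (toR c - toR a) + det2R (toR b - toR a) (toR d - toR a)
        = det2R (toR b - toR a) (toR c - toR a) := by
    by_contra hcon
    push_neg at hcon
    obtain ⟨hc1, hc2, hc3⟩ := hcon
    apply hint
    apply pos_coords_interior hDR
    · exact lt_of_le_of_ne h1 (Ne.symm (mul_ne_zero hc1 hDR))
    · exact lt_of_le_of_ne h2 (Ne.symm (mul_ne_zero hc2 hDR))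
    · apply lt_of_le_of_ne h3
      intro heq
      apply hc3
      have hfac : (det2R (toR d - toR a) (toR c - toR a) +
          det2R (toR b - toR a) (toR d - toR a) - det2R (toR b - toR a) (toR c - toR a)) *
          det2R (toR b - toR a) (toR c - toR a) = 0 := by
        ring_nf
        ring_nf at heq
        linarith
      rcases mul_eq_zero.1 hfac with h | h
      · linarith
      · exact absurd h hDR
  rcases hdeg with h0 | h0 | h0
  · -- d on segment [a, c]; use triangle with apex b
    have hdet' : det2 (a - b) (c - b) ≠ 0 := by
      intro h
      apply hdet
      have e : det2 (b - a) (c - a) = -det2 (a - b) (c - b) := by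
        simp only [det2, Prod.fst_sub, Prod.snd_sub]; ring
      rw [e, h]; ring
    have hT' : triPts b a c = {b, a, c, d} := by
      have hhull : triPts b a c = triPts a b c := by
        unfold triPts
        rw [Set.insert_comm]
      rw [hhull, hTeq]
      ext x; simp only [Set.mem_insert_iff, Set.mem_singleton_iff]; tauto
    have hseg : toR d ∈ convexHull ℝ {toR a, toR c} := seg_of_beta_zero hDR hd_hull h0
    have hmid := mid_of_seg hdet' hT' (Ne.symm had) (Ne.symm hcd) hseg
    have hk := empty_tri hdet' hT' hmid
    refine ⟨a, d - a, (b - d) + (d - a), ?_, haS, ?_, ?_⟩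
    · rw [det2_add_self_right]; exact hk
    · rw [show a + (d - a) = d by abel]; exact hdS
    · rw [show a + ((d - a) + (d - a)) = c from ?_]
      · exact hcS
      · have e1 := congrArg Prod.fst hmid
        have e2 := congrArg Prod.snd hmid
        simp only [Prod.fst_add, Prod.snd_add] at e1 e2
        rw [Prod.ext_iff]
        simp only [Prod.fst_add, Prod.snd_add, Prod.fst_sub, Prod.snd_sub]
        omega
  · -- d on segment [a, b]; use triangle with apex c
    have hdet' : det2 (a - c) (b - c) ≠ 0 := by
      intro h
      apply hdet
      have e : det2 (b - a) (c - a) = det2 (a - c) (b - c) := by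
        simp only [det2, Prod.fst_sub, Prod.snd_sub]; ring
      rw [e, h]
    have hT' : triPts c a b = {c, a, b, d} := by
      have hhull : triPts c a b = triPts a b c := by
        unfold triPts
        rw [show ({toR c, toR a, toR b} : Set (ℝ × ℝ)) = {toR a, toR b, toR c} from by
          ext y; simp only [Set.mem_insert_iff, Set.mem_singleton_iff]; tauto]
      rw [hhull, hTeq]
      ext x; simp only [Set.mem_insert_iff, Set.mem_singleton_iff]; tauto
    have hseg : toR d ∈ convexHull ℝ {toR a, toR b} := seg_of_gamma_zero hDR hd_hull h0
    have hmid := mid_of_seg hdet' hT' (Ne.symm had) (Ne.symm hbd) hseg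
    have hk := empty_tri hdet' hT' hmid
    refine ⟨a, d - a, (c - d) + (d - a), ?_, haS, ?_, ?_⟩
    · rw [det2_add_self_right]; exact hk
    · rw [show a + (d - a) = d by abel]; exact hdS
    · rw [show a + ((d - a) + (d - a)) = b from ?_]
      · exact hbS
      · have e1 := congrArg Prod.fst hmid
        have e2 := congrArg Prod.snd hmid
        simp only [Prod.fst_add, Prod.snd_add] at e1 e2
        rw [Prod.ext_iff]
        simp only [Prod.fst_add, Prod.snd_add, Prod.fst_sub, Prod.snd_sub]
        omega
  · -- d on segment [b, c]
    have hseg : toR d ∈ convexHull ℝ {toR b, toR c} := seg_of_alpha_zero hDR hd_hull h0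
    have hmid := mid_of_seg hdet hTeq (Ne.symm hbd) (Ne.symm hcd) hseg
    have hk := empty_tri hdet hTeq hmid
    refine ⟨b, d - b, (a - d) + (d - b), ?_, hbS, ?_, ?_⟩
    · rw [det2_add_self_right]; exact hk
    · rw [show b + (d - b) = d by abel]; exact hdS
    · rw [show b + ((d - b) + (d - b)) = c from ?_]
      · exact hcS
      · have e1 := congrArg Prod.fst hmid
        have e2 := congrArg Prod.snd hmid
        simp only [Prod.fst_add, Prod.snd_add] at e1 e2
        rw [Prod.ext_iff]
        simp only [Prod.fst_add, Prod.snd_add, Prod.fst_sub, Prod.snd_sub]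
        omega



theorem stmt7 (S : Set (ℤ × ℤ)) (hS : S ≠ Set.univ) :
    ((BStable S ∧ ∃ T, IsBorderTri T ∧ 3 ≤ (T ∩ S).ncard) → S = Set.univ) ∧
    (BStable S ↔ ∀ T, IsBorderTri T → (T ∩ S).ncard ≤ 2) := by
  have key : ∀ T : Set (ℤ × ℤ), BStable S → IsBorderTri T → 3 ≤ (T ∩ S).ncard →
      S = Set.univ := by
    intro T hB hTri h3
    obtain ⟨a, b, c, d, _, _, hT2, h4c, _⟩ := hTri
    have hfin : T.Finite := by rw [hT2]; exact Set.toFinite _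
    have hle : (T ∩ S).ncard ≤ 4 := by
      rw [← h4c]
      exact Set.ncard_le_ncard Set.inter_subset_left hfin
    have hne := hB T ⟨a, b, c, d, ‹_›, ‹_›, hT2, h4c, ‹_›⟩
    have hTS : T ⊆ S := by
      have hEq : T ∩ S = T := by
        apply Set.eq_of_subset_of_ncard_le Set.inter_subset_left _ hfin
        omega
      intro x hx
      rw [← hEq] at hx
      exact hx.2
    obtain ⟨p, u, v, hk, h0, h1, h2⟩ := seed ⟨a, b, c, d, ‹_›, ‹_›, hT2, h4c, ‹_›⟩ hTS
    exact prop_univ hB hk h0 h1 h2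
  refine ⟨fun ⟨hB, T, hTri, h3⟩ => key T hB hTri h3, ?_, ?_⟩
  · intro hB T hTri
    by_contra hcon
    exact hS (key T hB hTri (by omega))
  · intro h T hTri
    have := h T hTri
    omega
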